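/- Let G and H be finite groups and let α : G →* MulAut H be an action of G on H by automorphisms. For each natural number m, let c(m) be the number of orbits of the action having exactly m elements, and let H^G = {h ∈ H : α(g)(h) = h for all g ∈ G} be the fixed-point subgroup. Then |H^G| divides m·c(m) for every m ≥ 0. -/
import Mathlib

/-- The orbit of `a : H` under the action of `G` on `H` via `α`. -/
def orbitOf {G H : Type*} [Group G] [Group H] (α : G →* MulAut H) (a : H) : Set H :=
  Set.range fun g : G => α g a

section aux

variable {G H : Type*} [Group G] [Group H] (α : G →* MulAut H)

theorem mem_orbitOf_self (a : H) : a ∈ orbitOf α a := ⟨1, by simp⟩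

theorem orbitOf_apply (a : H) (g : G) : orbitOf α (α g a) = orbitOf α a := by
  ext x
  constructor
  · rintro ⟨g', rfl⟩
    exact ⟨g' * g, by simp [map_mul]⟩
  · rintro ⟨g', rfl⟩
    exact ⟨g' * g⁻¹, by simp [map_mul]⟩

theorem orbitOf_eq_of_mem {a b : H} (h : b ∈ orbitOf α a) : orbitOf α b = orbitOf α a := by
  obtain ⟨g, rfl⟩ := h
  exact orbitOf_apply α a g

/-- The fixed points as a subgroup. -/
def fixedSub : Subgroup H where
  carrier := {h | ∀ g : G, α g h = h}
  one_mem' := by simp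
  mul_mem' := fun {a b} ha hb g => by rw [map_mul, ha g, hb g]
  inv_mem' := fun {a} ha g => by rw [map_inv, ha g]

theorem orbitOf_smul (f : H) (hf : ∀ g : G, α g f = f) (b : H) :
    orbitOf α (f * b) = (f * ·) '' orbitOf α b := by
  ext x
  constructor
  · rintro ⟨g, rfl⟩
    exact ⟨α g b, ⟨g, rfl⟩, show f * α g b = α g (f * b) by rw [map_mul, hf g]⟩
  · rintro ⟨y, ⟨g, rfl⟩, rfl⟩
    exact ⟨g, show α g (f * b) = f * α g b by rw [map_mul, hf g]⟩

end aux

theorem stmt_7 {G H : Type*} [Group G] [Group H] [Finite G] [Finite H]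
    (α : G →* MulAut H) (m : ℕ) :
    Nat.card {h : H // ∀ g : G, α g h = h} ∣
      m * Nat.card {L : Set H // (∃ a : H, L = orbitOf α a) ∧ L.ncard = m} := by
  classical
  set F : Subgroup H := fixedSub α with hF
  set X : Set H := {h : H | (orbitOf α h).ncard = m} with hX
  set S := {L : Set H // (∃ a : H, L = orbitOf α a) ∧ L.ncard = m}
  -- Step 1: Nat.card X = Nat.card S * m
  have key_mem : ∀ (L : S) (x : H), x ∈ L.1 → orbitOf α x = L.1 := by
    rintro ⟨L, ⟨a, rfl⟩, hm⟩ x hx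
    exact orbitOf_eq_of_mem α hx
  have e1 : X ≃ Σ L : S, L.1 := by
    refine ⟨fun h => ⟨⟨orbitOf α h.1, ⟨h.1, rfl⟩, h.2⟩, ⟨h.1, mem_orbitOf_self α h.1⟩⟩,
      fun p => ⟨p.2.1, ?_⟩, fun h => rfl, ?_⟩
    · show (orbitOf α p.2.1).ncard = m
      rw [key_mem p.1 p.2.1 p.2.2]
      exact p.1.2.2
    · rintro ⟨⟨L, hL⟩, x, hx⟩
      obtain rfl := (key_mem ⟨L, hL⟩ x hx).symm
      rfl
  have cardX : Nat.card X = Nat.card S * m := by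
    haveI : Fintype S := Fintype.ofFinite S
    haveI : ∀ L : S, Fintype L.1 := fun L => Fintype.ofFinite _
    have hm : ∀ L : S, Fintype.card L.1 = m := fun L => by
      rw [← Nat.card_eq_fintype_card, Nat.card_coe_set_eq]; exact L.2.2
    rw [Nat.card_congr e1, Nat.card_eq_fintype_card, Fintype.card_sigma]
    simp only [hm]
    rw [Finset.sum_const, Finset.card_univ, smul_eq_mul, Nat.card_eq_fintype_card]
  -- Step 2: Nat.card F ∣ Nat.card X
  have Xsmul : ∀ (f : F) (x : H), x ∈ X → f • x ∈ X := by
    rintro ⟨f, hf⟩ x hx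
    show (orbitOf α (f * x)).ncard = m
    rw [orbitOf_smul α f hf x, Set.ncard_image_of_injective _ (mul_right_injective f)]
    exact hx
  let P : SubMulAction F H := ⟨X, fun {f x} hx => Xsmul f x hx⟩
  have dvd2 : Nat.card F ∣ Nat.card X := by
    haveI : Finite P := Set.Finite.to_subtype (Set.toFinite X)
    have e2 := MulAction.selfEquivSigmaOrbitsQuotientStabilizer F P
    have stabbot : ∀ x : P, MulAction.stabilizer F x = ⊥ := by
      intro x
      ext f
      simp only [MulAction.mem_stabilizer_iff, Subgroup.mem_bot]
      constructor
      · intro hfx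
        have h2 : (f : H) * (x : H) = (x : H) := congrArg Subtype.val hfx
        exact Subtype.ext (mul_right_cancel
          (show (f : H) * (x : H) = 1 * (x : H) by rw [h2, one_mul]))
      · rintro rfl; exact one_smul _ _
    have e3 : (Σ ω : MulAction.orbitRel.Quotient F P,
        F ⧸ MulAction.stabilizer F ω.out) ≃ (MulAction.orbitRel.Quotient F P) × F :=
      (Equiv.sigmaCongrRight fun ω => by
        rw [stabbot]; exact (QuotientGroup.quotientBot (G := F)).toEquiv).trans
        (Equiv.sigmaEquivProd _ _)
    have key : Nat.card P = Nat.card (MulAction.orbitRel.Quotient F P) * Nat.card F := by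
      rw [Nat.card_congr (e2.trans e3), Nat.card_prod]
    have hPX : Nat.card P = Nat.card X := rfl
    rw [← hPX, key]
    exact dvd_mul_left _ _
  have hFcard : Nat.card {h : H // ∀ g : G, α g h = h} = Nat.card F :=
    Nat.card_congr (Equiv.subtypeEquivRight (fun h => Iff.rfl))
  rw [hFcard, mul_comm m _ ]
  rw [cardX] at dvd2
  exact dvd2
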